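/- Quasi-norm comparison, singular range: let σ > 1 and p ∈ (1, σ]. There exists a constant C > 0 depending only on p and σ such that for every measure space (D, μ) and all measurable real-valued f, g on D with ‖f‖_{L^p(μ)} < ∞ and ‖g‖_{L^p(μ)} < ∞, one has |f|_{g,p,σ}^{σ/p} ≤ ‖f‖_{L^p(μ)}^σ ≤ C (‖f‖_{L^p(μ)} + ‖g‖_{L^p(μ)})^{σ−p} |f|_{g,p,σ}. -/

import Mathlib

open MeasureTheory

/-- The quasi-norm quantity `|f|_{g,p,σ} = ∫_D (|f| + |g|)^{p−σ} |f|^σ dμ`, with the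
convention that the integrand is `0` wherever `f = 0`. -/
noncomputable def quasiNorm {D : Type*} [MeasurableSpace D] (μ : Measure D)
    (f g : D → ℝ) (p σ : ℝ) : ENNReal :=
  ∫⁻ x, if f x = 0 then 0
    else ENNReal.ofReal ((|f x| + |g x|) ^ (p - σ) * |f x| ^ σ) ∂μ

/-- The `L^p` norm `(∫_D |f|^p dμ)^{1/p}` as a value in `[0, ∞]`. -/
noncomputable def lpNorm {D : Type*} [MeasurableSpace D] (μ : Measure D)
    (f : D → ℝ) (p : ℝ) : ENNReal :=
  (∫⁻ x, ENNReal.ofReal (|f x| ^ p) ∂μ) ^ (1 / p)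

/-- Quasi-norm comparison in the singular range: for `σ > 1`,
`p ∈ (1, σ]`, there is `C > 0` (depending only on `p, σ`) such that for every measure
space and all measurable `f, g` with finite `L^p` norms,
`|f|_{g,p,σ}^{σ/p} ≤ ‖f‖_p^σ ≤ C (‖f‖_p + ‖g‖_p)^{σ−p} |f|_{g,p,σ}`. -/
theorem stmt_6.{u} (σ : ℝ) (hσ : 1 < σ) (p : ℝ) (hp : 1 < p) (hpσ : p ≤ σ) :
    ∃ C > (0 : ℝ), ∀ (D : Type u) [MeasurableSpace D] (μ : Measure D) (f g : D → ℝ),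
      Measurable f → Measurable g →
      lpNorm μ f p ≠ ⊤ → lpNorm μ g p ≠ ⊤ →
      quasiNorm μ f g p σ ^ (σ / p) ≤ lpNorm μ f p ^ σ ∧
      lpNorm μ f p ^ σ ≤
        ENNReal.ofReal C * (lpNorm μ f p + lpNorm μ g p) ^ (σ - p) *
          quasiNorm μ f g p σ := by
  have hp0 : (0:ℝ) < p := lt_trans zero_lt_one hp
  have hσ0 : (0:ℝ) < σ := lt_trans zero_lt_one hσ
  refine ⟨1, one_pos, ?_⟩
  intro D _ μ f g hf hg _ _
  -- notation
  set φ : D → ENNReal := fun x => if f x = 0 then 0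
    else ENNReal.ofReal ((|f x| + |g x|) ^ (p - σ) * |f x| ^ σ) with hφ
  have hQ : quasiNorm μ f g p σ = ∫⁻ x, φ x ∂μ := rfl
  set F : D → ENNReal := fun x => ENNReal.ofReal (|f x| ^ p) with hF
  have hLp : lpNorm μ f p = (∫⁻ x, F x ∂μ) ^ (1/p) := rfl
  -- pointwise bound φ ≤ F
  have hφF : ∀ x, φ x ≤ F x := by
    intro x
    by_cases hx : f x = 0
    · simp [hφ, hx]
    · have hb : 0 < |f x| := abs_pos.mpr hx
      have ha : 0 < |f x| + |g x| := lt_of_lt_of_le hb (le_add_of_nonneg_right (abs_nonneg _))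
      have h1 : (|f x| + |g x|) ^ (p - σ) ≤ |f x| ^ (p - σ) :=
        Real.rpow_le_rpow_of_nonpos hb (le_add_of_nonneg_right (abs_nonneg _)) (by linarith)
      have h2 : (|f x| + |g x|) ^ (p - σ) * |f x| ^ σ ≤ |f x| ^ p := by
        calc (|f x| + |g x|) ^ (p - σ) * |f x| ^ σ
            ≤ |f x| ^ (p - σ) * |f x| ^ σ :=
              mul_le_mul_of_nonneg_right h1 (Real.rpow_nonneg (abs_nonneg _) _)
          _ = |f x| ^ p := by rw [← Real.rpow_add hb]; ring_nf
      simp only [hφ, hF, hx, if_neg hx]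
      exact ENNReal.ofReal_le_ofReal h2
  have hint : (∫⁻ x, φ x ∂μ) ≤ ∫⁻ x, F x ∂μ := lintegral_mono hφF
  constructor
  · -- first inequality
    rw [hQ, hLp, ← ENNReal.rpow_mul]
    have : 1/p * σ = σ/p := by ring
    rw [this]
    exact ENNReal.rpow_le_rpow hint (by positivity)
  · -- second inequality
    rw [ENNReal.ofReal_one, one_mul]
    by_cases hps : p = σ
    · subst hps
      have hQeq : quasiNorm μ f g p p = ∫⁻ x, F x ∂μ := by
        rw [hQ]
        refine lintegral_congr fun x => ?_
        by_cases hx : f x = 0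
        · simp [hφ, hF, hx, Real.zero_rpow (ne_of_gt hp0)]
        · simp [hφ, hF, hx, Real.rpow_zero]
      rw [hQeq, sub_self, ENNReal.rpow_zero, one_mul, hLp, ← ENNReal.rpow_mul]
      rw [one_div_mul_cancel (ne_of_gt hp0), ENNReal.rpow_one]
    · have hps' : p < σ := lt_of_le_of_ne hpσ hps
      -- Hölder setup
      set ψ : D → ENNReal := fun x => ENNReal.ofReal ((|f x| + |g x|) ^ p) with hψ
      have hφm : Measurable φ := by
        apply Measurable.ite (hf (measurableSet_singleton 0)) measurable_const
        exact ENNReal.measurable_ofReal.comp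
          (((hf.abs.add hg.abs).pow measurable_const).mul (hf.abs.pow measurable_const))
      have hψm : Measurable ψ := by
        exact ENNReal.measurable_ofReal.comp ((hf.abs.add hg.abs).pow measurable_const)
      have hconj : (σ/p).HolderConjugate (σ/(σ-p)) := by
        constructor
        · rw [inv_div, inv_div, inv_one, ← add_div, add_sub_cancel, div_self hσ0.ne']
        · positivity
        · exact div_pos hσ0 (by linarith)
      -- pointwise: F x = (φ x ^ (p/σ)) * (ψ x ^ ((σ-p)/σ))
      have hpt : ∀ x, F x = φ x ^ (p/σ) * ψ x ^ ((σ-p)/σ) := by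
        intro x
        by_cases hx : f x = 0
        · have : φ x = 0 := by simp [hφ, hx]
          rw [this, ENNReal.zero_rpow_of_pos (by positivity), zero_mul]
          simp [hF, hx, Real.zero_rpow (ne_of_gt hp0)]
        · have hb : 0 < |f x| := abs_pos.mpr hx
          have ha : 0 < |f x| + |g x| := lt_of_lt_of_le hb (le_add_of_nonneg_right (abs_nonneg _))
          have haσ : (0:ℝ) ≤ (|f x| + |g x|) ^ (p - σ) := Real.rpow_nonneg ha.le _
          have hreal : ((|f x| + |g x|) ^ (p - σ) * |f x| ^ σ) ^ (p/σ) *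
              ((|f x| + |g x|) ^ p) ^ ((σ-p)/σ) = |f x| ^ p := by
            rw [Real.mul_rpow haσ (Real.rpow_nonneg (abs_nonneg _) _),
              ← Real.rpow_mul ha.le, ← Real.rpow_mul (abs_nonneg _), ← Real.rpow_mul ha.le,
              mul_right_comm, ← Real.rpow_add ha]
            have h1 : (p - σ) * (p/σ) + p * ((σ-p)/σ) = 0 := by field_simp; ring
            have h2 : σ * (p/σ) = p := by field_simp
            rw [h1, h2, Real.rpow_zero, one_mul]
          calc F x = ENNReal.ofReal (((|f x| + |g x|) ^ (p - σ) * |f x| ^ σ) ^ (p/σ) *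
                ((|f x| + |g x|) ^ p) ^ ((σ-p)/σ)) := by rw [hreal]
            _ = ENNReal.ofReal (((|f x| + |g x|) ^ (p - σ) * |f x| ^ σ) ^ (p/σ)) *
                ENNReal.ofReal (((|f x| + |g x|) ^ p) ^ ((σ-p)/σ)) :=
                  ENNReal.ofReal_mul (by positivity)
            _ = φ x ^ (p/σ) * ψ x ^ ((σ-p)/σ) := by
                rw [show φ x = ENNReal.ofReal ((|f x| + |g x|) ^ (p - σ) * |f x| ^ σ)
                    from if_neg hx,
                  ENNReal.ofReal_rpow_of_nonneg (by positivity) (by positivity),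
                  show ψ x = ENNReal.ofReal ((|f x| + |g x|) ^ p) from rfl,
                  ENNReal.ofReal_rpow_of_nonneg (by positivity)
                    (div_nonneg (by linarith) hσ0.le)]
      -- Hölder
      have hHolder : (∫⁻ x, F x ∂μ) ≤
          (∫⁻ x, φ x ∂μ) ^ (p/σ) * (∫⁻ x, ψ x ∂μ) ^ ((σ-p)/σ) := by
        have h := ENNReal.lintegral_mul_le_Lp_mul_Lq μ hconj
          (hφm.pow_const (p/σ)).aemeasurable (hψm.pow_const ((σ-p)/σ)).aemeasurable
        calc (∫⁻ x, F x ∂μ)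
            = ∫⁻ x, ((fun x => φ x ^ (p/σ)) * fun x => ψ x ^ ((σ-p)/σ)) x ∂μ := by
              refine lintegral_congr fun x => ?_; simp [hpt x]
          _ ≤ (∫⁻ x, (φ x ^ (p/σ)) ^ (σ/p) ∂μ) ^ (1/(σ/p)) *
              (∫⁻ x, (ψ x ^ ((σ-p)/σ)) ^ (σ/(σ-p)) ∂μ) ^ (1/(σ/(σ-p))) := h
          _ = (∫⁻ x, φ x ∂μ) ^ (p/σ) * (∫⁻ x, ψ x ∂μ) ^ ((σ-p)/σ) := by
              have e1 : ∀ y : ENNReal, (y ^ (p/σ)) ^ (σ/p) = y := by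
                intro y
                rw [← ENNReal.rpow_mul]
                rw [show p/σ * (σ/p) = 1 by field_simp, ENNReal.rpow_one]
              have e2 : ∀ y : ENNReal, (y ^ ((σ-p)/σ)) ^ (σ/(σ-p)) = y := by
                intro y
                rw [← ENNReal.rpow_mul]
                have hsp : σ - p ≠ 0 := ne_of_gt (by linarith)
                rw [show (σ-p)/σ * (σ/(σ-p)) = 1 by field_simp, ENNReal.rpow_one]
              simp_rw [e1, e2, one_div_div]
      -- Minkowski
      have hMink : (∫⁻ x, ψ x ∂μ) ^ (1/p) ≤ lpNorm μ f p + lpNorm μ g p := by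
        have h := ENNReal.lintegral_Lp_add_le (μ := μ)
          (f := fun x => ENNReal.ofReal |f x|) (g := fun x => ENNReal.ofReal |g x|)
          (ENNReal.measurable_ofReal.comp hf.abs).aemeasurable
          (ENNReal.measurable_ofReal.comp hg.abs).aemeasurable hp.le
        have eψ : ∀ x, ψ x = ((fun x => ENNReal.ofReal |f x|) +
            fun x => ENNReal.ofReal |g x|) x ^ p := by
          intro x
          simp only [Pi.add_apply, hψ]
          rw [← ENNReal.ofReal_add (abs_nonneg _) (abs_nonneg _),
            ENNReal.ofReal_rpow_of_nonneg (by positivity) hp0.le]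
        have ef : ∀ x, ENNReal.ofReal (|f x| ^ p) = ENNReal.ofReal |f x| ^ p := fun x =>
          (ENNReal.ofReal_rpow_of_nonneg (abs_nonneg _) hp0.le).symm
        have eg : ∀ x, ENNReal.ofReal (|g x| ^ p) = ENNReal.ofReal |g x| ^ p := fun x =>
          (ENNReal.ofReal_rpow_of_nonneg (abs_nonneg _) hp0.le).symm
        calc (∫⁻ x, ψ x ∂μ) ^ (1/p)
            = (∫⁻ x, ((fun x => ENNReal.ofReal |f x|) + fun x => ENNReal.ofReal |g x|) x ^ p ∂μ)
              ^ (1/p) := by rw [lintegral_congr eψ]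
          _ ≤ (∫⁻ x, ENNReal.ofReal |f x| ^ p ∂μ) ^ (1/p) +
              (∫⁻ x, ENNReal.ofReal |g x| ^ p ∂μ) ^ (1/p) := h
          _ = lpNorm μ f p + lpNorm μ g p := by
              rw [_root_.lpNorm, _root_.lpNorm]
              congr 2 <;> [exact (lintegral_congr ef).symm; exact (lintegral_congr eg).symm]
      -- assemble
      have hψS : (∫⁻ x, ψ x ∂μ) ^ ((σ-p)/p) ≤ (lpNorm μ f p + lpNorm μ g p) ^ (σ-p) := by
        calc (∫⁻ x, ψ x ∂μ) ^ ((σ-p)/p)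
            = ((∫⁻ x, ψ x ∂μ) ^ (1/p)) ^ (σ-p) := by
              rw [← ENNReal.rpow_mul]; congr 1; field_simp
          _ ≤ (lpNorm μ f p + lpNorm μ g p) ^ (σ-p) :=
              ENNReal.rpow_le_rpow hMink (by linarith)
      calc lpNorm μ f p ^ σ
          = (∫⁻ x, F x ∂μ) ^ (σ/p) := by
            rw [hLp, ← ENNReal.rpow_mul]; congr 1; ring
        _ ≤ ((∫⁻ x, φ x ∂μ) ^ (p/σ) * (∫⁻ x, ψ x ∂μ) ^ ((σ-p)/σ)) ^ (σ/p) :=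
            ENNReal.rpow_le_rpow hHolder (by positivity)
        _ = (∫⁻ x, φ x ∂μ) * (∫⁻ x, ψ x ∂μ) ^ ((σ-p)/p) := by
            rw [ENNReal.mul_rpow_of_nonneg _ _ (by positivity), ← ENNReal.rpow_mul,
              ← ENNReal.rpow_mul]
            congr 2 <;> field_simp <;> exact ENNReal.rpow_one _
        _ ≤ (∫⁻ x, φ x ∂μ) * (lpNorm μ f p + lpNorm μ g p) ^ (σ-p) :=
            mul_le_mul_right hψS _
        _ = (lpNorm μ f p + lpNorm μ g p) ^ (σ-p) * quasiNorm μ f g p σ := by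
            rw [hQ, mul_comm]
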